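/- Define graphs R_i recursively: R_0 is the empty graph, and R_i consists of a clique on vertices v_1,...,v_i together with i disjoint copies H_1,...,H_i of R_p where p = floor((i-1)/2), where v_j is additionally adjacent to all vertices of H_j. Then R_i admits a linear coloring with exactly i colors. -/

import Mathlib

/-- A linear coloring: every path in `G` contains a vertex whose color appears
exactly once on the path. -/
def IsLinearColoring {V C : Type*} [DecidableEq C] (G : SimpleGraph V) (ψ : V → C) : Prop :=
  ∀ ⦃u v : V⦄ (p : G.Walk u v), p.IsPath →
    ∃ w ∈ p.support, (p.support.map ψ).count (ψ w) = 1

/-- A centered coloring: every nonempty vertex set inducing a connected subgraph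
contains a vertex whose color appears exactly once in the set. -/
def IsCenteredColoring {V C : Type*} [DecidableEq C] (G : SimpleGraph V) (φ : V → C) : Prop :=
  ∀ S : Finset V, S.Nonempty → (G.induce (S : Set V)).Connected →
    ∃ w ∈ S, (S.filter (fun x => φ x = φ w)).card = 1

/-- The linear coloring number: minimum number of colors of a linear coloring. -/
noncomputable def chiLin {V : Type*} (G : SimpleGraph V) : ℕ :=
  sInf {k | ∃ ψ : V → Fin k, IsLinearColoring G ψ}

/-- The centered coloring number: minimum number of colors of a centered coloring. -/
noncomputable def chiCen {V : Type*} (G : SimpleGraph V) : ℕ :=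
  sInf {k | ∃ φ : V → Fin k, IsCenteredColoring G φ}

/-- A treedepth decomposition of `G`: a rooted forest on the vertices of `G`,
given by its ancestor relation `anc` (a partial order whose down-sets are chains),
such that every edge of `G` joins an ancestor-descendant pair. -/
structure TreedepthDecomp {V : Type*} (G : SimpleGraph V) where
  anc : V → V → Prop
  refl : ∀ v, anc v v
  antisymm : ∀ u v, anc u v → anc v u → u = v
  trans : ∀ u v w, anc u v → anc v w → anc u w
  chain : ∀ u v w, anc u w → anc v w → anc u v ∨ anc v u
  edge : ∀ u v, G.Adj u v → anc u v ∨ anc v u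

/-- The decomposition has depth at most `k`: every ancestor-descendant chain has
at most `k` vertices. -/
def TreedepthDecomp.depthLE {V : Type*} {G : SimpleGraph V} (d : TreedepthDecomp G)
    (k : ℕ) : Prop :=
  ∀ s : Finset V, (∀ a ∈ s, ∀ b ∈ s, d.anc a b ∨ d.anc b a) → s.card ≤ k

/-- The treedepth of `G`: minimum depth of a treedepth decomposition. -/
noncomputable def treedepth {V : Type*} (G : SimpleGraph V) : ℕ :=
  sInf {k | ∃ d : TreedepthDecomp G, d.depthLE k}

/-- The (asymmetric) edge relation of the recursive graph family `R_i`,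
on vertices encoded as lists: the clique vertex `v_j` is `[j]`, and a vertex `w`
of the `j`-th copy `H_j` of `R_{⌊(i-1)/2⌋}` is encoded as `j :: w`. -/
def RRel : ℕ → List ℕ → List ℕ → Prop
  | 0 => fun _ _ => False
  | (i + 1) => fun x y =>
      (∃ a b, x = [a] ∧ y = [b] ∧ a ≠ b)
      ∨ (∃ j w, w ≠ [] ∧ x = [j] ∧ y = j :: w)
      ∨ (∃ j w w', RRel (i / 2) w w' ∧ x = j :: w ∧ y = j :: w')
termination_by i => i
decreasing_by exact Nat.lt_succ_of_le (Nat.div_le_self i 2)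

/-- The vertex set of `R_i` (as lists): `R_0` is empty, and `R_{i}` consists of
clique vertices `v_1, …, v_i` (encoded `[j]`, `j < i`) together with `i`
disjoint copies `H_1, …, H_i` of `R_{⌊(i-1)/2⌋}` (the `j`-th copy prefixed by `j`). -/
def RVset : ℕ → Set (List ℕ)
  | 0 => ∅
  | (i + 1) => {x | (∃ j, j < i + 1 ∧ x = [j]) ∨
      ∃ j w, j < i + 1 ∧ w ∈ RVset (i / 2) ∧ x = j :: w}
termination_by i => i
decreasing_by exact Nat.lt_succ_of_le (Nat.div_le_self i 2)

/-- The recursive graph `R_i`: a clique on `v_1, …, v_i`, with `v_j` additionally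
adjacent to every vertex of the `j`-th copy of `R_{⌊(i-1)/2⌋}`. -/
def RGraph (i : ℕ) : SimpleGraph (RVset i) :=
  (SimpleGraph.fromRel (RRel i)).induce (RVset i)


section Aux

open List

/-- generic: count of a value in a mapped list as a countP. -/
theorem LC.count_map {α β : Type*} [DecidableEq β] (l : List α) (f : α → β) (b : β) :
    (l.map f).count b = l.countP (fun x => f x = b) := by
  induction l with
  | nil => simp
  | cons a t ih =>
    simp only [List.map_cons, List.count_cons, List.countP_cons, ih, beq_iff_eq,
      decide_eq_true_eq]

theorem LC.countP_eq_one {α : Type*} [DecidableEq α] :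
    ∀ {L : List α}, L.Nodup → ∀ {z : α}, z ∈ L → L.countP (fun x => decide (x = z)) = 1 := by
  intro L
  induction L with
  | nil => intro _ z hz; simp at hz
  | cons a t ih =>
    intro hnd z hz
    rw [List.nodup_cons] at hnd
    rw [List.countP_cons]
    rcases List.mem_cons.mp hz with rfl | hz'
    · have h0 : t.countP (fun x => decide (x = z)) = 0 := by
        rw [List.countP_eq_zero]
        intro x hx
        simp only [decide_eq_true_eq]
        rintro rfl; exact hnd.1 hx
      simp [h0]
    · have haz : ¬ (a = z) := fun h => hnd.1 (h ▸ hz')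
      simp [haz, ih hnd.2 hz']

theorem LC.count_one_of {φ : List ℕ → ℕ} {L : List (List ℕ)} (hnd : L.Nodup) {z : List ℕ}
    (hz : z ∈ L) (h : ∀ x ∈ L, φ x = φ z → x = z) : (L.map φ).count (φ z) = 1 := by
  rw [LC.count_map]
  have : L.countP (fun x => decide (φ x = φ z)) = L.countP (fun x => decide (x = z)) := by
    apply List.countP_congr
    intro x hx
    simp only [decide_eq_true_eq]
    exact ⟨h x hx, fun hxz => by rw [hxz]⟩
  rw [this]
  exact LC.countP_eq_one hnd hz

/-- crossing lemma -/
theorem LC.crossing {α : Type*} {R : α → α → Prop} {P : α → Prop} :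
    ∀ {L : List α}, List.Chain' R L → ∀ x ∈ L, P x → ∀ y ∈ L, ¬ P y →
      ∃ u v, u ∈ L ∧ v ∈ L ∧ R u v ∧ ((P u ∧ ¬ P v) ∨ (¬ P u ∧ P v)) := by
  intro L
  induction L with
  | nil => intro _ x hx; exact absurd hx (by simp)
  | cons a rest ih =>
    intro hch x hx hPx y hy hPy
    cases rest with
    | nil =>
      simp only [List.mem_singleton] at hx hy
      subst hx; subst hy; exact absurd hPx hPy
    | cons b rest' =>
      simp only [List.Chain', List.isChain_cons_cons] at hch
      obtain ⟨hrab, hch'⟩ := hch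
      by_cases hPa : P a
      · by_cases hPb : P b
        · -- y ≠ a, so y ∈ b :: rest'
          have hy' : y ∈ b :: rest' := by
            rcases List.mem_cons.mp hy with rfl | hy'
            · exact absurd hPa hPy
            · assumption
          obtain ⟨u, v, hu, hv, hr, hd⟩ := ih hch' b (by simp) hPb y hy' hPy
          exact ⟨u, v, List.mem_cons_of_mem _ hu, List.mem_cons_of_mem _ hv, hr, hd⟩
        · exact ⟨a, b, by simp, by simp, hrab, Or.inl ⟨hPa, hPb⟩⟩
      · by_cases hPb : P b
        · exact ⟨a, b, by simp, by simp, hrab, Or.inr ⟨hPa, hPb⟩⟩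
        · have hx' : x ∈ b :: rest' := by
            rcases List.mem_cons.mp hx with rfl | hx'
            · exact absurd hPx hPa
            · assumption
          obtain ⟨u, v, hu, hv, hr, hd⟩ := ih hch' x hx' hPx b (by simp) hPb
          exact ⟨u, v, List.mem_cons_of_mem _ hu, List.mem_cons_of_mem _ hv, hr, hd⟩

theorem LC.chain'_imp_mem {α : Type*} {R S : α → α → Prop} :
    ∀ {L : List α}, List.Chain' R L → (∀ a ∈ L, ∀ b ∈ L, R a b → S a b) → List.Chain' S L := by
  intro L
  induction L with
  | nil => intro _ _; exact List.isChain_nil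
  | cons a rest ih =>
    intro hch himp
    cases rest with
    | nil => exact List.isChain_singleton _
    | cons b rest' =>
      simp only [List.Chain', List.isChain_cons_cons] at hch ⊢
      refine ⟨himp a (by simp) b (by simp) hch.1, ih hch.2 ?_⟩
      intro u hu v hv; exact himp u (List.mem_cons_of_mem _ hu) v (List.mem_cons_of_mem _ hv)

theorem LC.chain'_eq_all {α β : Type*} {f : α → β} :
    ∀ {L : List α}, List.Chain' (fun u v => f u = f v) L → ∀ x ∈ L, ∀ y ∈ L, f x = f y := by
  have key : ∀ (a : α) (L : List α), List.Chain' (fun u v => f u = f v) (a :: L) →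
      ∀ x ∈ a :: L, f x = f a := by
    intro a L
    induction L generalizing a with
    | nil => intro _ x hx; simp only [List.mem_singleton] at hx; rw [hx]
    | cons b t ih =>
      intro hch x hx
      simp only [List.Chain', List.isChain_cons_cons] at hch
      rcases List.mem_cons.mp hx with rfl | hx'
      · rfl
      · rw [ih b hch.2 x hx']; exact hch.1.symm
  intro L hch x hx y hy
  cases L with
  | nil => simp at hx
  | cons a t => rw [key a t hch x hx, key a t hch y hy]

/-- modular arithmetic helpers -/
theorem LC.mod_fixed {n a k : ℕ} (ha : a < n) (hk : 0 < k) (hkn : k < n)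
    (h : a = (a + k) % n) : False := by
  have h1 : (a + k) % n = a % n := by rw [← h, Nat.mod_eq_of_lt ha]
  have h2 : a ≡ a + k [MOD n] := h1.symm
  have h3 : n ∣ (a + k) - a := (Nat.modEq_iff_dvd' (Nat.le_add_right a k)).mp h2
  rw [Nat.add_sub_cancel_left] at h3
  exact absurd (Nat.le_of_dvd hk h3) (not_le.mpr hkn)

theorem LC.modinj {m j c c' : ℕ} (hc : c < m / 2) (hc' : c' < m / 2)
    (h : (j + 1 + c) % (m + 1) = (j + 1 + c') % (m + 1)) : c = c' := by
  have h2 : c ≡ c' [MOD (m + 1)] := Nat.ModEq.add_left_cancel' (j + 1) h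
  have hcm : c < m + 1 := lt_of_lt_of_le hc (le_trans (Nat.div_le_self m 2) (Nat.le_succ m))
  have hcm' : c' < m + 1 := lt_of_lt_of_le hc' (le_trans (Nat.div_le_self m 2) (Nat.le_succ m))
  have := h2
  unfold Nat.ModEq at this
  rwa [Nat.mod_eq_of_lt hcm, Nat.mod_eq_of_lt hcm'] at this

theorem LC.not_self_window {m a c : ℕ} (ha : a < m + 1) (hc : c < m / 2) :
    a ≠ (a + 1 + c) % (m + 1) := by
  intro h
  rw [show a + 1 + c = a + (1 + c) by ring] at h
  exact LC.mod_fixed ha (by omega : 0 < 1 + c) (by omega) h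

theorem LC.window_antisym {m a b c c' : ℕ} (ha : a < m + 1) (hc : c < m / 2) (hc' : c' < m / 2)
    (h1 : a = (b + 1 + c) % (m + 1)) (h2 : b = (a + 1 + c') % (m + 1)) : False := by
  rw [h2] at h1
  rw [Nat.add_assoc, Nat.mod_add_mod] at h1
  rw [show a + 1 + c' + (1 + c) = a + (2 + c' + c) by ring] at h1
  exact LC.mod_fixed ha (by omega) (by omega) h1

end Aux

section Main

/-- symmetrized relation -/
def LCRel (n : ℕ) (x y : List ℕ) : Prop := x ≠ y ∧ (RRel n x y ∨ RRel n y x)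

theorem LCRel.symm {n : ℕ} {x y : List ℕ} (h : LCRel n x y) : LCRel n y x :=
  ⟨h.1.symm, h.2.symm⟩

theorem LC.hclass {m : ℕ} {x : List ℕ} (hx : x ∈ RVset (m + 1)) :
    (∃ c, c < m + 1 ∧ x = [c]) ∨
      (∃ j w, j < m + 1 ∧ w ≠ [] ∧ w ∈ RVset (m / 2) ∧ x = j :: w) := by
  rw [RVset] at hx
  rcases hx with ⟨j, hj, rfl⟩ | ⟨j, w, hj, hw, rfl⟩
  · exact Or.inl ⟨j, hj, rfl⟩
  · refine Or.inr ⟨j, w, hj, ?_, hw, rfl⟩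
    -- w ∈ RVset (m/2) implies w ≠ []
    intro hnil
    subst hnil
    rcases Nat.eq_zero_or_pos (m / 2) with h0 | hpos
    · rw [h0, RVset] at hw; exact hw
    · obtain ⟨k, hk⟩ := Nat.exists_eq_add_of_lt hpos
      rw [show m / 2 = k + 1 by omega, RVset] at hw
      rcases hw with ⟨j', _, h⟩ | ⟨j', w', _, _, h⟩ <;> simp at h

/-- neighbor lemma: a non-`H_j` neighbor of an `H_j`-vertex is `[j]`. -/
theorem LC.neighbor {m j : ℕ} {w y : List ℕ} (hw : w ≠ [])
    (hr : LCRel (m + 1) (j :: w) y ∨ LCRel (m + 1) y (j :: w))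
    (hnot : ∀ w', w' ≠ [] → y ≠ j :: w') : y = [j] := by
  have hrr : RRel (m + 1) (j :: w) y ∨ RRel (m + 1) y (j :: w) := by
    rcases hr with h | h
    · exact h.2
    · exact h.2.symm
  rcases hrr with h | h
  · rw [RRel] at h
    rcases h with ⟨a, b, hx, _, _⟩ | ⟨j', w', _, hx, _⟩ | ⟨j', w1, w1', _, hx, hy⟩
    · injection hx with _ h2; exact absurd h2 hw
    · injection hx with _ h2; exact absurd h2 hw
    · injection hx with h1 h2
      subst h1
      rcases eq_or_ne w1' [] with rfl | hne
      · exact hy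
      · exact absurd hy (hnot w1' hne)
  · rw [RRel] at h
    rcases h with ⟨a, b, hy, hx, _⟩ | ⟨j', w', _, hy, hx⟩ | ⟨j', w1, w1', _, hy, hx⟩
    · injection hx with _ h2; exact absurd h2 hw
    · injection hx with h1 _; subst h1; exact hy
    · injection hx with h1 _
      subst h1
      rcases eq_or_ne w1 [] with rfl | hne
      · exact hy
      · exact absurd hy (hnot w1 hne)

/-- two adjacent `H`-vertices have the same head and related tails. -/
theorem LC.relHH {m j j' : ℕ} {w w' : List ℕ} (hw : w ≠ []) (hw' : w' ≠ [])
    (hr : LCRel (m + 1) (j :: w) (j' :: w')) : j = j' ∧ LCRel (m / 2) w w' := by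
  have hne := hr.1
  have key : j = j' ∧ (RRel (m / 2) w w' ∨ RRel (m / 2) w' w) := by
    rcases hr.2 with h | h
    · rw [RRel] at h
      rcases h with ⟨a, b, hx, _, _⟩ | ⟨j1, w1, _, hx, _⟩ | ⟨j1, w1, w1', hrel, hx, hy⟩
      · injection hx with _ h2; exact absurd h2 hw
      · injection hx with _ h2; exact absurd h2 hw
      · injection hx with hx1 hx2; injection hy with hy1 hy2
        subst hx1; subst hx2; subst hy2
        exact ⟨hy1.symm, Or.inl hrel⟩
    · rw [RRel] at h
      rcases h with ⟨a, b, hx, hy, _⟩ | ⟨j1, w1, _, hx, hy⟩ | ⟨j1, w1, w1', hrel, hx, hy⟩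
      · injection hx with _ h2; exact absurd h2 hw'
      · injection hx with _ h2; exact absurd h2 hw'
      · injection hx with hx1 hx2; injection hy with hy1 hy2
        subst hx1; subst hx2; subst hy2
        exact ⟨hy1, Or.inr hrel⟩
  obtain ⟨rfl, hor⟩ := key
  refine ⟨rfl, ⟨?_, hor⟩⟩
  intro heq; exact hne (by rw [heq])

/-- the color function -/
def LCcolor (n : ℕ) (g : List ℕ → ℕ) : List ℕ → ℕ
  | [] => 0
  | (j :: w) => if w = [] then j else (j + 1 + g w) % n

@[simp] theorem LCcolor_single (n : ℕ) (g : List ℕ → ℕ) (c : ℕ) :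
    LCcolor n g [c] = c := by simp [LCcolor]

theorem LCcolor_cons (n : ℕ) (g : List ℕ → ℕ) (j : ℕ) {w : List ℕ} (hw : w ≠ []) :
    LCcolor n g (j :: w) = (j + 1 + g w) % n := by simp [LCcolor, hw]

end Main

theorem LC.main : ∀ n : ℕ, ∃ φ : List ℕ → ℕ,
    (∀ x ∈ RVset n, φ x < n) ∧ (∀ c, c < n → ∃ x ∈ RVset n, φ x = c) ∧
    (∀ L : List (List ℕ), L ≠ [] → L.Nodup → (∀ x ∈ L, x ∈ RVset n) →
      List.Chain' (LCRel n) L → ∃ w ∈ L, (L.map φ).count (φ w) = 1) := by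
  intro n
  induction n using Nat.strong_induction_on with
  | _ n IH =>
  cases n with
  | zero =>
    refine ⟨fun _ => 0, ?_, ?_, ?_⟩
    · intro x hx; rw [RVset] at hx; exact hx.elim
    · intro c hc; omega
    · intro L hne _ hmem _
      have := hmem (L.head hne) (List.head_mem hne)
      rw [RVset] at this; exact this.elim
  | succ m =>
    obtain ⟨φp, hpbound, hpsurj, hpgood⟩ := IH (m / 2) (Nat.lt_succ_of_le (Nat.div_le_self m 2))
    refine ⟨LCcolor (m + 1) φp, ?_, ?_, ?_⟩
    · -- bound
      intro x hx
      rcases LC.hclass hx with ⟨c, hc, rfl⟩ | ⟨j, w, hj, hw, hwm, rfl⟩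
      · simpa using hc
      · rw [LCcolor_cons _ _ _ hw]
        exact Nat.mod_lt _ (Nat.succ_pos m)
    · -- surjective
      intro c hc
      refine ⟨[c], ?_, by simp⟩
      rw [RVset]; exact Or.inl ⟨c, hc, rfl⟩
    · -- linear on paths
      intro L hne hnd hmem hch
      have hclassL : ∀ x ∈ L, (∃ c, c < m + 1 ∧ x = [c]) ∨
          (∃ j w, j < m + 1 ∧ w ≠ [] ∧ w ∈ RVset (m / 2) ∧ x = j :: w) :=
        fun x hx => LC.hclass (hmem x hx)
      have hHdata : ∀ x ∈ L, ∀ j w, w ≠ [] → x = j :: w →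
          j < m + 1 ∧ w ∈ RVset (m / 2) ∧ φp w < m / 2 := by
        intro x hx j w hw hxw
        rcases hclassL x hx with ⟨c, _, rfl⟩ | ⟨j', w', hj', hw', hwm', heq⟩
        · injection hxw with h1 h2
          exact absurd h2.symm hw
        · rw [hxw] at heq
          injection heq with h1 h2
          subst h1; subst h2
          exact ⟨hj', hwm', hpbound w hwm'⟩
      by_cases hallH : ∀ x ∈ L, ∃ j w, w ≠ [] ∧ x = j :: w
      · -- Case A : no clique vertices, all in one copy H_{j0}
        have heL := List.head_mem hne
        obtain ⟨j0, w0, hw0, he⟩ := hallH _ heL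
        have hheads : ∀ x ∈ L, ∃ w, w ≠ [] ∧ x = j0 :: w := by
          have hchain2 : List.Chain' (fun u v : List ℕ => u.head? = v.head?) L := by
            refine LC.chain'_imp_mem hch ?_
            intro a ha b hb hr
            obtain ⟨ja, wa, hwa, rfl⟩ := hallH a ha
            obtain ⟨jb, wb, hwb, rfl⟩ := hallH b hb
            have := (LC.relHH hwa hwb hr).1
            simp [this]
          intro x hx
          obtain ⟨jx, wx, hwx, hxe⟩ := hallH x hx
          have hh : x.head? = (L.head hne).head? := LC.chain'_eq_all hchain2 x hx _ heL
          rw [hxe, he] at hh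
          simp only [List.head?_cons, Option.some.injEq] at hh
          exact ⟨wx, hwx, by rw [hxe, hh]⟩
        have htail : ∀ x ∈ L, ∃ w, w ≠ [] ∧ x = j0 :: w ∧ x.tail = w := by
          intro x hx
          obtain ⟨w, hw, rfl⟩ := hheads x hx
          exact ⟨w, hw, rfl, rfl⟩
        -- pass to the list of tails
        have hne' : L.map List.tail ≠ [] := by
          simpa using hne
        have hnd' : (L.map List.tail).Nodup := by
          refine List.Nodup.map_on ?_ hnd
          intro x hx y hy hxy
          obtain ⟨wx, hwx, rfl⟩ := hheads x hx
          obtain ⟨wy, hwy, rfl⟩ := hheads y hy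
          simp only [List.tail_cons] at hxy
          rw [hxy]
        have hmem' : ∀ t ∈ L.map List.tail, t ∈ RVset (m / 2) := by
          intro t ht
          obtain ⟨x, hx, rfl⟩ := List.mem_map.mp ht
          obtain ⟨w, hw, rfl⟩ := hheads x hx
          exact (hHdata _ hx j0 w hw rfl).2.1
        have hch' : List.Chain' (LCRel (m / 2)) (L.map List.tail) := by
          simp only [List.Chain', List.isChain_map]
          refine LC.chain'_imp_mem hch ?_
          intro a ha b hb hr
          obtain ⟨wa, hwa, rfl⟩ := hheads a ha
          obtain ⟨wb, hwb, rfl⟩ := hheads b hb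
          simpa using (LC.relHH hwa hwb hr).2
        obtain ⟨t, htL, hcnt⟩ := hpgood (L.map List.tail) hne' hnd' hmem' hch'
        obtain ⟨x0, hx0L, hx0t⟩ := List.mem_map.mp htL
        obtain ⟨w1, hw1, rfl⟩ := hheads x0 hx0L
        simp only [List.tail_cons] at hx0t
        subst hx0t
        refine ⟨j0 :: w1, hx0L, ?_⟩
        rw [LC.count_map]
        rw [LC.count_map] at hcnt
        refine Eq.trans ?_ hcnt
        rw [List.countP_map]
        apply List.countP_congr
        intro x hx
        obtain ⟨wx, hwx, rfl⟩ := hheads x hx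
        simp only [Function.comp, List.tail_cons, decide_eq_true_eq]
        rw [LCcolor_cons _ _ _ hwx, LCcolor_cons _ _ _ hw1]
        constructor
        · intro h
          exact decide_eq_true (LC.modinj (hHdata _ hx j0 wx hwx rfl).2.2
            (hHdata _ hx0L j0 w1 hw1 rfl).2.2 h)
        · intro h; rw [of_decide_eq_true h]
      · -- Case B : some clique vertex present
        push_neg at hallH
        obtain ⟨x₀, hx₀L, hx₀⟩ := hallH
        obtain ⟨c₀, hc₀, rfl⟩ : ∃ c, c < m + 1 ∧ x₀ = [c] := by
          rcases hclassL x₀ hx₀L with h | ⟨j, w, _, hw, _, hxw⟩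
          · exact h
          · exact absurd hxw (hx₀ j w hw)
        -- every copy the path enters is linked to its clique vertex
        have CV : ∀ j, (∃ x ∈ L, ∃ w, w ≠ [] ∧ x = j :: w) → [j] ∈ L := by
          rintro j ⟨x, hxL, w, hw, rfl⟩
          have hnotP : ¬ (∃ w', w' ≠ [] ∧ ([c₀] : List ℕ) = j :: w') := by
            rintro ⟨w', hw', h⟩; exact hx₀ j w' hw' h
          obtain ⟨u, v, huL, hvL, hr, hd⟩ :=
            LC.crossing (P := fun z => ∃ w', w' ≠ [] ∧ z = j :: w') hch _ hxL
              ⟨w, hw, rfl⟩ _ hx₀L hnotP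
          rcases hd with ⟨⟨wu, hwu, rfl⟩, hnv⟩ | ⟨hnu, ⟨wv, hwv, rfl⟩⟩
          · have hv : v = [j] := LC.neighbor hwu (Or.inl hr)
              (fun w' h hveq => hnv ⟨w', h, hveq⟩)
            exact hv ▸ hvL
          · have hu : u = [j] := LC.neighbor hwv (Or.inr hr)
              (fun w' h hueq => hnu ⟨w', h, hueq⟩)
            exact hu ▸ huL
        -- every copy the path enters touches an end of the path
        have ENDS : ∀ j, (∃ x ∈ L, ∃ w, w ≠ [] ∧ x = j :: w) →
            (L.head hne).head? = some j ∨ (L.getLast hne).head? = some j := by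
          classical
          rintro j ⟨x, hxL, w, hw, rfl⟩
          set P : List ℕ → Prop := fun z => ∃ w', w' ≠ [] ∧ z = j :: w' with hP
          set Q : ℕ → Prop := fun t => ∃ h : t < L.length, P (L.get ⟨t, h⟩) with hQ
          obtain ⟨ix, hix⟩ := List.mem_iff_get.mp hxL
          have hQx : Q ix.1 := ⟨ix.2, by rw [Fin.eta, hix]; exact ⟨w, hw, rfl⟩⟩
          have hEQ : ∃ t, Q t := ⟨ix.1, hQx⟩
          have ht₁ : Q (Nat.find hEQ) := Nat.find_spec hEQ
          have ht₂ : Q (Nat.findGreatest Q L.length) :=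
            Nat.findGreatest_spec (le_of_lt ix.2) hQx
          set t₁ := Nat.find hEQ with hdt₁
          set t₂ := Nat.findGreatest Q L.length with hdt₂
          have hle : t₁ ≤ t₂ := Nat.find_min' hEQ ht₂
          by_cases h1 : t₁ = 0
          · left
            have hQ0 : Q 0 := h1 ▸ ht₁
            obtain ⟨h0, hp0⟩ := hQ0
            have hhd : L.get ⟨0, h0⟩ = L.head hne := by
              cases L with
              | nil => exact absurd rfl hne
              | cons a l => rfl
            rw [hhd] at hp0
            obtain ⟨w', _, hw'⟩ := hp0
            rw [hw']; rfl
          · by_cases h2 : t₂ = L.length - 1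
            · right
              obtain ⟨hlt2, hp2⟩ := ht₂
              have hg : L.getLast hne = L.get ⟨t₂, hlt2⟩ := by
                rw [List.getLast_eq_getElem, List.get_eq_getElem]
                congr 1
                exact h2.symm
              rw [← hg] at hp2
              obtain ⟨w', _, hw'⟩ := hp2
              rw [hw']; rfl
            · exfalso
              have h1' : 1 ≤ t₁ := Nat.one_le_iff_ne_zero.mpr h1
              obtain ⟨hlt2, hp2⟩ := ht₂
              have hlen : t₂ + 1 < L.length := by omega
              have hchg := List.isChain_iff_getElem.mp hch
              obtain ⟨hlt1, hp1⟩ := ht₁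
              -- the element just before the first H_j element is [j]
              have e1 : LCRel (m + 1) (L.get ⟨t₁ - 1, by omega⟩) (L.get ⟨t₁ - 1 + 1, by omega⟩) :=
                  hchg (t₁ - 1) (by omega)
              have hidx : t₁ - 1 + 1 = t₁ := by omega
              have hget1 : L.get ⟨t₁ - 1 + 1, by omega⟩ = L.get ⟨t₁, hlt1⟩ := by
                congr 1; exact Fin.ext hidx
              rw [hget1] at e1
              have hmin : ¬ Q (t₁ - 1) := Nat.find_min hEQ (by omega)
              have hnotP1 : ∀ w', w' ≠ [] → L.get ⟨t₁ - 1, by omega⟩ ≠ j :: w' := by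
                intro w' hw' heq
                exact hmin ⟨by omega, ⟨w', hw', heq⟩⟩
              obtain ⟨wu, hwu, hu⟩ := hp1
              rw [hu] at e1
              have hv1 : L.get ⟨t₁ - 1, by omega⟩ = [j] :=
                LC.neighbor hwu (Or.inr e1) hnotP1
              -- the element just after the last H_j element is [j]
              have e2 : LCRel (m + 1) (L.get ⟨t₂, by omega⟩) (L.get ⟨t₂ + 1, by omega⟩) :=
                  hchg t₂ (by omega)
              have hmax : ¬ Q (t₂ + 1) :=
                Nat.findGreatest_is_greatest (n := L.length) (by omega) (by omega)
              have hnotP2 : ∀ w', w' ≠ [] → L.get ⟨t₂ + 1, by omega⟩ ≠ j :: w' := by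
                intro w' hw' heq
                exact hmax ⟨by omega, ⟨w', hw', heq⟩⟩
              obtain ⟨wz, hwz, hz⟩ := hp2
              rw [hz] at e2
              have hv2 : L.get ⟨t₂ + 1, by omega⟩ = [j] :=
                LC.neighbor hwz (Or.inl e2) hnotP2
              -- contradiction with Nodup
              have : (⟨t₁ - 1, by omega⟩ : Fin L.length) = ⟨t₂ + 1, by omega⟩ :=
                (List.Nodup.get_inj_iff hnd).mp (by rw [hv1, hv2])
              have := Fin.mk.injEq .. ▸ this
              omega
        -- final selection of the uniquely colored vertex
        by_cases hH : ∃ x ∈ L, ∃ j w, w ≠ [] ∧ x = j :: w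
        · obtain ⟨xh, hxhL, jH, wH, hwH, hxh⟩ := hH
          have hjHlt : jH < m + 1 := (hHdata _ hxhL jH wH hwH hxh).1
          by_cases h2 : ∃ x ∈ L, ∃ j' w', w' ≠ [] ∧ x = j' :: w' ∧ j' ≠ jH
          · -- two distinct heads jH and j2
            obtain ⟨x2, hx2L, j2, w2, hw2, hx2, hj2⟩ := h2
            have hj2lt : j2 < m + 1 := (hHdata _ hx2L j2 w2 hw2 hx2).1
            -- every H-head is jH or j2
            have hkey : ∀ x ∈ L, ∀ j w, w ≠ [] → x = j :: w → j = jH ∨ j = j2 := by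
              intro x hx j w hw hxw
              have hj := ENDS j ⟨x, hx, w, hw, hxw⟩
              have hjH := ENDS jH ⟨xh, hxhL, wH, hwH, hxh⟩
              have hj2' := ENDS j2 ⟨x2, hx2L, w2, hw2, hx2⟩
              rcases hj with hj | hj <;> rcases hjH with hjH | hjH <;>
                rcases hj2' with hj2' | hj2' <;>
                [skip; skip; skip; skip; skip; skip; skip; skip] <;>
                first
                  | (left; rw [hjH] at hj; exact (Option.some.injEq _ _ ▸ hj).symm ▸ rfl)
                  | (right; rw [hj2'] at hj; exact (Option.some.injEq _ _ ▸ hj).symm ▸ rfl)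
                  | (exfalso; rw [hjH] at hj2'; exact hj2 (Option.some.injEq _ _ ▸ hj2').symm)
            have haL : [jH] ∈ L := CV jH ⟨xh, hxhL, wH, hwH, hxh⟩
            have hbL : [j2] ∈ L := CV j2 ⟨x2, hx2L, w2, hw2, hx2⟩
            by_cases hwnd : ∃ c, c < m / 2 ∧ jH = (j2 + 1 + c) % (m + 1)
            · -- jH lies in the window of H_{j2}; then [j2] has a unique color
              refine ⟨[j2], hbL, LC.count_one_of hnd hbL ?_⟩
              intro x hx hcol
              rw [LCcolor_single] at hcol
              rcases hclassL x hx with ⟨c, _, rfl⟩ | ⟨j, w, hjlt, hw, hwm, rfl⟩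
              · rw [LCcolor_single] at hcol; rw [hcol]
              · exfalso
                rw [LCcolor_cons _ _ _ hw] at hcol
                have hφ : φp w < m / 2 := (hHdata _ hx j w hw rfl).2.2
                rcases hkey _ hx j w hw rfl with rfl | rfl
                · obtain ⟨c, hc, hcw⟩ := hwnd
                  exact LC.window_antisym hj2lt hφ hc hcol.symm hcw
                · exact LC.not_self_window hj2lt hφ hcol.symm
            · -- otherwise [jH] has a unique color
              push_neg at hwnd
              refine ⟨[jH], haL, LC.count_one_of hnd haL ?_⟩
              intro x hx hcol
              rw [LCcolor_single] at hcol
              rcases hclassL x hx with ⟨c, _, rfl⟩ | ⟨j, w, hjlt, hw, hwm, rfl⟩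
              · rw [LCcolor_single] at hcol; rw [hcol]
              · exfalso
                rw [LCcolor_cons _ _ _ hw] at hcol
                have hφ : φp w < m / 2 := (hHdata _ hx j w hw rfl).2.2
                rcases hkey _ hx j w hw rfl with rfl | rfl
                · exact LC.not_self_window hjHlt hφ hcol.symm
                · exact hwnd (φp w) hφ hcol.symm
          · -- all H-vertices have head jH
            push_neg at h2
            have haL : [jH] ∈ L := CV jH ⟨xh, hxhL, wH, hwH, hxh⟩
            refine ⟨[jH], haL, LC.count_one_of hnd haL ?_⟩
            intro x hx hcol
            rw [LCcolor_single] at hcol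
            rcases hclassL x hx with ⟨c, _, rfl⟩ | ⟨j, w, hjlt, hw, hwm, rfl⟩
            · rw [LCcolor_single] at hcol; rw [hcol]
            · exfalso
              rw [LCcolor_cons _ _ _ hw] at hcol
              have hφ : φp w < m / 2 := (hHdata _ hx j w hw rfl).2.2
              have : j = jH := h2 _ hx j w hw rfl
              subst this
              exact LC.not_self_window hjHlt hφ hcol.symm
        · -- no H-vertices at all : all clique vertices, distinct colors
          push_neg at hH
          refine ⟨[c₀], hx₀L, LC.count_one_of hnd hx₀L ?_⟩
          intro x hx hcol
          rw [LCcolor_single] at hcol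
          rcases hclassL x hx with ⟨c, _, rfl⟩ | ⟨j, w, _, hw, _, rfl⟩
          · rw [LCcolor_single] at hcol; rw [hcol]
          · exact absurd rfl (hH _ hx j w hw)


/-- `R_i` admits a linear coloring with exactly `i` colors. -/
theorem rGraph_linearColoring_exact (i : ℕ) :
    ∃ ψ : (RVset i) → Fin i, Function.Surjective ψ ∧ IsLinearColoring (RGraph i) ψ := by
  obtain ⟨φ, hbound, hsurj, hgood⟩ := LC.main i
  refine ⟨fun x => ⟨φ x.1, hbound x.1 x.2⟩, ?_, ?_⟩
  · intro c
    obtain ⟨x, hx, hφ⟩ := hsurj c.1 c.2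
    exact ⟨⟨x, hx⟩, Fin.ext hφ⟩
  · intro u v q hq
    have hne : q.support.map Subtype.val ≠ [] := by
      simp only [ne_eq, List.map_eq_nil_iff]
      exact q.support_ne_nil
    have hnd : (q.support.map Subtype.val).Nodup :=
      hq.support_nodup.map Subtype.val_injective
    have hmem : ∀ x ∈ q.support.map Subtype.val, x ∈ RVset i := by
      intro x hx
      obtain ⟨y, _, rfl⟩ := List.mem_map.mp hx
      exact y.2
    have hch : List.Chain' (LCRel i) (q.support.map Subtype.val) := by
      simp only [List.Chain', List.isChain_map]
      refine LC.chain'_imp_mem q.isChain_adj_support ?_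
      intro a _ b _ hadj
      have h2 : (SimpleGraph.fromRel (RRel i)).Adj a.1 b.1 := hadj
      rw [SimpleGraph.fromRel_adj] at h2
      exact ⟨h2.1, h2.2⟩
    obtain ⟨w, hwL, hcnt⟩ := hgood (q.support.map Subtype.val) hne hnd hmem hch
    obtain ⟨w0, hw0, rfl⟩ := List.mem_map.mp hwL
    refine ⟨w0, hw0, ?_⟩
    rw [LC.count_map] at hcnt ⊢
    rw [List.countP_map] at hcnt
    refine Eq.trans ?_ hcnt
    apply List.countP_congr
    intro x hx
    simp only [Function.comp, decide_eq_true_eq, Fin.mk.injEq]
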